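/- Let φ be holomorphic on 𝔻² with |φ| ≤ 1, let τ ∈ 𝕋², and let (M, v, I_Y) be a generalized model for φ with a C-point at τ with limit value v_τ. Suppose moreover that φ has nontangential limit φ(τ) at τ with |φ(τ)| = 1. Then for every δ ∈ ℂ² with Re(τ̄¹δ¹) < 0 and Re(τ̄²δ²) < 0, the directional derivative D_δφ(τ) = lim_{t→0⁺} (φ(τ+tδ) − φ(τ))/t exists and equals φ(τ)·⟨δ¹δ²(τ²δ¹(1−Y) + τ¹δ²Y)^{−1} v_τ, v_τ⟩. -/

import Mathlib

open Complex Filter Set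

/-- The operator-valued rational function `I_Y(λ)` associated to a positive
contraction `Y` and a point `τ` of the torus. -/
noncomputable def IY {M : Type*} [NormedAddCommGroup M] [InnerProductSpace ℂ M]
    [CompleteSpace M] (Y : M →L[ℂ] M) (τ z : ℂ × ℂ) : M →L[ℂ] M :=
  ((starRingEnd ℂ τ.1 * z.1) • Y + (starRingEnd ℂ τ.2 * z.2) • ((1 : M →L[ℂ] M) - Y)
      - (starRingEnd ℂ τ.1 * starRingEnd ℂ τ.2 * z.1 * z.2) • (1 : M →L[ℂ] M)) *
    Ring.inverse ((1 : M →L[ℂ] M) - (starRingEnd ℂ τ.1 * z.1) • ((1 : M →L[ℂ] M) - Y)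
      - (starRingEnd ℂ τ.2 * z.2) • Y)

local notation "⟪" x ", " y "⟫" => @inner ℂ _ _ x y

lemma aux_real {M : Type*} [NormedAddCommGroup M] [InnerProductSpace ℂ M] [CompleteSpace M]
    (T : M →L[ℂ] M) (hT : T.IsPositive) (x : M) : (⟪T x, x⟫).im = 0 := by
  have h1 : ⟪T x, x⟫ = ⟪x, T x⟫ := hT.1 x x
  have h2 : (starRingEnd ℂ) ⟪x, T x⟫ = ⟪T x, x⟫ := inner_conj_symm _ _
  have h3 : (starRingEnd ℂ) ⟪T x, x⟫ = ⟪T x, x⟫ := by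
    conv_lhs => rw [h1, h2]
  exact Complex.conj_eq_iff_im.mp h3

lemma aux_isUnit {M : Type*} [NormedAddCommGroup M] [InnerProductSpace ℂ M] [CompleteSpace M]
    (Y : M →L[ℂ] M) (hY : Y.IsPositive) (hY' : ((1 : M →L[ℂ] M) - Y).IsPositive)
    {a b : ℂ} (ha : a.re < 0) (hb : b.re < 0) :
    IsUnit (a • ((1 : M →L[ℂ] M) - Y) + b • Y) := by
  set m : ℝ := min (-a.re) (-b.re) with hm
  have hm0 : 0 < m := lt_min (by linarith) (by linarith)
  refine ContinuousLinearMap.isUnit_of_forall_le_norm_inner_map _ (c := ⟨m, hm0.le⟩)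
    (by exact_mod_cast hm0) fun x => ?_
  set p : ℂ := ⟪((1 : M →L[ℂ] M) - Y) x, x⟫ with hp
  set q : ℂ := ⟪Y x, x⟫ with hq
  have hpim : p.im = 0 := aux_real _ hY' x
  have hqim : q.im = 0 := aux_real _ hY x
  have hpre : 0 ≤ p.re := (Complex.le_def.mp (hY'.inner_nonneg_left x)).1
  have hqre : 0 ≤ q.re := (Complex.le_def.mp (hY.inner_nonneg_left x)).1
  have hsum : p + q = (‖x‖ : ℂ) ^ 2 := by
    rw [hp, hq, ← inner_add_left]
    have : ((1 : M →L[ℂ] M) - Y) x + Y x = x := by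
      simp [ContinuousLinearMap.sub_apply]
    rw [this]
    exact inner_self_eq_norm_sq_to_K x
  have hsumre : p.re + q.re = ‖x‖ ^ 2 := by
    have := congrArg Complex.re hsum
    simpa [← Complex.ofReal_pow] using this
  have hval : ⟪(a • ((1 : M →L[ℂ] M) - Y) + b • Y) x, x⟫ = (starRingEnd ℂ) a * p + (starRingEnd ℂ) b * q := by
    simp [ContinuousLinearMap.add_apply, ContinuousLinearMap.smul_apply, inner_add_left,
      inner_smul_left, hp, hq]
    ring
  rw [hval]
  have hre : ((starRingEnd ℂ) a * p + (starRingEnd ℂ) b * q).re = a.re * p.re + b.re * q.re := by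
    simp [Complex.add_re, Complex.mul_re, Complex.conj_re, Complex.conj_im, hpim, hqim]
  have h1 : ‖x‖ ^ 2 * m ≤ -(((starRingEnd ℂ) a * p + (starRingEnd ℂ) b * q).re) := by
    rw [hre, ← hsumre]
    have h2 : m ≤ -a.re := min_le_left _ _
    have h3 : m ≤ -b.re := min_le_right _ _
    nlinarith
  calc ‖x‖ ^ 2 * (⟨m, hm0.le⟩ : NNReal) ≤ -(((starRingEnd ℂ) a * p + (starRingEnd ℂ) b * q).re) := h1
    _ ≤ |(((starRingEnd ℂ) a * p + (starRingEnd ℂ) b * q).re)| := neg_le_abs _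
    _ ≤ ‖(starRingEnd ℂ) a * p + (starRingEnd ℂ) b * q‖ := Complex.abs_re_le_norm _

lemma aux_inv_smul {R : Type*} [Ring R] [Algebra ℂ R] {c : ℂ} (hc : c ≠ 0) {A : R}
    (hA : IsUnit A) : Ring.inverse (c • A) = c⁻¹ • Ring.inverse A := by
  obtain ⟨u, rfl⟩ := hA
  have hmul : ∀ (x y : ℂ) (r s : R), (x • r) * (y • s) = (x * y) • (r * s) := by
    intro x y r s
    rw [smul_mul_assoc, mul_smul_comm, smul_smul]
  let w : Rˣ := ⟨c • (u : R), c⁻¹ • ((u⁻¹ : Rˣ) : R),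
    by rw [hmul, mul_inv_cancel₀ hc, u.mul_inv, one_smul],
    by rw [hmul, inv_mul_cancel₀ hc, u.inv_mul, one_smul]⟩
  have h1 : c • (u : R) = (w : R) := rfl
  rw [h1, Ring.inverse_unit, Ring.inverse_unit]
  rfl

lemma aux_IY {M : Type*} [NormedAddCommGroup M] [InnerProductSpace ℂ M] [CompleteSpace M]
    (Y : M →L[ℂ] M) (τ : ℂ × ℂ) (hτ1 : starRingEnd ℂ τ.1 * τ.1 = 1)
    (hτ2 : starRingEnd ℂ τ.2 * τ.2 = 1) (δ : ℂ × ℂ) {t : ℂ} (ht : t ≠ 0)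
    (hA : IsUnit ((starRingEnd ℂ τ.1 * δ.1) • ((1 : M →L[ℂ] M) - Y)
        + (starRingEnd ℂ τ.2 * δ.2) • Y)) :
    IY Y τ (τ.1 + t * δ.1, τ.2 + t * δ.2)
      = 1 + (t * (starRingEnd ℂ τ.1 * δ.1) * (starRingEnd ℂ τ.2 * δ.2)) •
          Ring.inverse ((starRingEnd ℂ τ.1 * δ.1) • ((1 : M →L[ℂ] M) - Y)
            + (starRingEnd ℂ τ.2 * δ.2) • Y) := by
  set a : ℂ := starRingEnd ℂ τ.1 * δ.1 with hadef
  set b : ℂ := starRingEnd ℂ τ.2 * δ.2 with hbdef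
  set A : M →L[ℂ] M := a • ((1 : M →L[ℂ] M) - Y) + b • Y with hAdef
  set B : M →L[ℂ] M := Ring.inverse A with hBdef
  have hc1 : starRingEnd ℂ τ.1 * (τ.1 + t * δ.1) = 1 + t * a := by
    rw [hadef]; linear_combination hτ1
  have hc2 : starRingEnd ℂ τ.2 * (τ.2 + t * δ.2) = 1 + t * b := by
    rw [hbdef]; linear_combination hτ2
  have hc3 : starRingEnd ℂ τ.1 * starRingEnd ℂ τ.2 * (τ.1 + t * δ.1) * (τ.2 + t * δ.2)
      = (1 + t * a) * (1 + t * b) := by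
    rw [hadef, hbdef]
    linear_combination (starRingEnd ℂ τ.2 * (τ.2 + t*δ.2)) * hτ1
      + (1 + t * (starRingEnd ℂ τ.1 * δ.1)) * hτ2
  rw [IY]
  simp only [hc1, hc2, hc3]
  have hD : (1 : M →L[ℂ] M) - (1 + t * a) • ((1 : M →L[ℂ] M) - Y) - (1 + t * b) • Y
      = (-t) • A := by
    rw [hAdef]; module
  have hN : (1 + t * a) • Y + (1 + t * b) • ((1 : M →L[ℂ] M) - Y)
      - ((1 + t * a) * (1 + t * b)) • (1 : M →L[ℂ] M)
      = (-t) • A + (-(t^2 * a * b)) • (1 : M →L[ℂ] M) := by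
    rw [hAdef]; module
  rw [hD, hN, aux_inv_smul (neg_ne_zero.mpr ht) hA, ← hBdef]
  have hAB : A * B = 1 := Ring.mul_inverse_cancel A hA
  calc ((-t) • A + (-(t^2 * a * b)) • (1 : M →L[ℂ] M)) * ((-t)⁻¹ • B)
      = ((-t) * (-t)⁻¹) • (A * B) + ((-(t^2 * a * b)) * (-t)⁻¹) • ((1 : M →L[ℂ] M) * B) := by
        rw [add_mul, smul_mul_assoc, smul_mul_assoc, mul_smul_comm, mul_smul_comm,
          smul_smul, smul_smul]
    _ = 1 + (t * a * b) • B := by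
        rw [hAB, one_mul]
        congr 1
        · rw [mul_inv_cancel₀ (neg_ne_zero.mpr ht), one_smul]
        · congr 1
          field_simp

lemma aux_norm {c : ℂ} (hc : c.re < 0) {t : ℝ} (ht : 0 < t)
    (ht' : t ≤ (-c.re) / (Complex.normSq c + 1)) :
    ‖1 + (t : ℂ) * c‖ ≤ 1 + t * c.re / 2 := by
  have hns : 0 ≤ Complex.normSq c := Complex.normSq_nonneg c
  have ht2 : t * (Complex.normSq c + 1) ≤ -c.re := by
    rw [div_eq_inv_mul] at ht'
    calc t * (Complex.normSq c + 1) ≤ ((Complex.normSq c + 1)⁻¹ * (-c.re)) * (Complex.normSq c + 1) := by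
          apply mul_le_mul_of_nonneg_right ht' (by linarith)
      _ = -c.re := by field_simp
  set X : ℝ := ‖1 + (t : ℂ) * c‖ with hX
  have hX0 : 0 ≤ X := norm_nonneg _
  have hsq : X ^ 2 = 1 + 2 * t * c.re + t ^ 2 * Complex.normSq c := by
    rw [hX, Complex.sq_norm, Complex.normSq_apply]
    simp [Complex.add_re, Complex.add_im, Complex.mul_re, Complex.mul_im, Complex.normSq_apply]
    ring
  have h1 : t ^ 2 * Complex.normSq c ≤ t * (-c.re) - t ^ 2 := by
    nlinarith [mul_le_mul_of_nonneg_left ht2 ht.le]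
  have h2 : X ^ 2 ≤ 1 + t * c.re - t ^ 2 := by linarith
  have h3 : 0 ≤ 1 + t * c.re - t ^ 2 := by nlinarith [sq_nonneg X]
  have h4 : 0 ≤ 1 + t * c.re / 2 := by nlinarith [sq_nonneg t]
  have h5 : X ^ 2 ≤ (1 + t * c.re / 2) ^ 2 := by nlinarith [sq_nonneg (t * c.re), sq_nonneg t]
  exact le_of_pow_le_pow_left₀ two_ne_zero h4 h5

theorem stmt4 {M : Type*} [NormedAddCommGroup M] [InnerProductSpace ℂ M] [CompleteSpace M]
    (φ : ℂ × ℂ → ℂ) (hφd : DifferentiableOn ℂ φ {z : ℂ × ℂ | ‖z‖ < 1})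
    (hφb : ∀ z : ℂ × ℂ, ‖z‖ < 1 → ‖φ z‖ ≤ 1)
    (τ : ℂ × ℂ) (hτ1 : ‖τ.1‖ = 1) (hτ2 : ‖τ.2‖ = 1)
    (Y : M →L[ℂ] M) (hY : Y.IsPositive) (hY' : ((1 : M →L[ℂ] M) - Y).IsPositive)
    (v : ℂ × ℂ → M) (hv : DifferentiableOn ℂ v {z : ℂ × ℂ | ‖z‖ < 1})
    -- `(M, v, I_Y)` is a generalized model for `φ`
    (hmodel : ∀ zl zm : ℂ × ℂ, ‖zl‖ < 1 → ‖zm‖ < 1 →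
      (1 : ℂ) - starRingEnd ℂ (φ zm) * φ zl =
        (inner ℂ (v zm)
          ((((1 : M →L[ℂ] M) - ContinuousLinearMap.adjoint (IY Y τ zm) * IY Y τ zl)) (v zl)) : ℂ))
    -- the model has a `C`-point at `τ` with limit value `vτ`
    (vτ : M)
    (hC : ∀ S : Set (ℂ × ℂ), S ⊆ {z : ℂ × ℂ | ‖z‖ < 1} →
      (∃ c > 0, ∀ z ∈ S, ‖τ - z‖ ≤ c * (1 - ‖z‖)) →
      Tendsto v (nhdsWithin τ S) (nhds vτ))
    -- `φ` has nontangential limit `φτ` at `τ`, of modulus one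
    (φτ : ℂ) (hφτ : ‖φτ‖ = 1)
    (hφlim : ∀ S : Set (ℂ × ℂ), S ⊆ {z : ℂ × ℂ | ‖z‖ < 1} →
      (∃ c > 0, ∀ z ∈ S, ‖τ - z‖ ≤ c * (1 - ‖z‖)) →
      Tendsto φ (nhdsWithin τ S) (nhds φτ)) :
    ∀ δ : ℂ × ℂ, (starRingEnd ℂ τ.1 * δ.1).re < 0 → (starRingEnd ℂ τ.2 * δ.2).re < 0 →
      Tendsto (fun t : ℝ => (φ (τ.1 + (t : ℂ) * δ.1, τ.2 + (t : ℂ) * δ.2) - φτ) / (t : ℂ))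
        (nhdsWithin (0 : ℝ) (Set.Ioi 0))
        (nhds (φτ * (inner ℂ vτ
          (((δ.1 * δ.2) •
            Ring.inverse ((τ.2 * δ.1) • ((1 : M →L[ℂ] M) - Y) + (τ.1 * δ.2) • Y)) vτ) : ℂ))) := by
  intro δ ha hb
  have hτ1' : starRingEnd ℂ τ.1 * τ.1 = 1 := by
    have hns : Complex.normSq τ.1 = 1 := by
      rw [Complex.normSq_eq_norm_sq, hτ1]; norm_num
    rw [mul_comm, Complex.mul_conj, hns]; norm_num
  have hτ2' : starRingEnd ℂ τ.2 * τ.2 = 1 := by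
    have hns : Complex.normSq τ.2 = 1 := by
      rw [Complex.normSq_eq_norm_sq, hτ2]; norm_num
    rw [mul_comm, Complex.mul_conj, hns]; norm_num
  have hτ1ne : τ.1 ≠ 0 := by
    intro h; rw [h] at hτ1; simp at hτ1
  have hτ2ne : τ.2 ≠ 0 := by
    intro h; rw [h] at hτ2; simp at hτ2
  set a : ℂ := starRingEnd ℂ τ.1 * δ.1 with hadef
  set b : ℂ := starRingEnd ℂ τ.2 * δ.2 with hbdef
  set A : M →L[ℂ] M := a • ((1 : M →L[ℂ] M) - Y) + b • Y with hAdef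
  have hA : IsUnit A := aux_isUnit Y hY hY' ha hb
  set B : M →L[ℂ] M := Ring.inverse A with hBdef
  -- identify the target operator
  have hBgoal : (δ.1 * δ.2) • Ring.inverse ((τ.2 * δ.1) • ((1 : M →L[ℂ] M) - Y)
      + (τ.1 * δ.2) • Y) = (a * b) • B := by
    have e1 : (τ.1 * τ.2) * a = τ.2 * δ.1 := by
      rw [hadef]; linear_combination (τ.2 * δ.1) * hτ1'
    have e2 : (τ.1 * τ.2) * b = τ.1 * δ.2 := by
      rw [hbdef]; linear_combination (τ.1 * δ.2) * hτ2'
    have h1 : (τ.2 * δ.1) • ((1 : M →L[ℂ] M) - Y) + (τ.1 * δ.2) • Y = (τ.1 * τ.2) • A := by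
      rw [hAdef, smul_add, smul_smul, smul_smul, e1, e2]
    rw [h1, aux_inv_smul (mul_ne_zero hτ1ne hτ2ne) hA, ← hBdef, smul_smul]
    congr 1
    have e3 : a * b * (τ.1 * τ.2) = δ.1 * δ.2 := by
      rw [hadef, hbdef]
      linear_combination ((δ.1 * δ.2) * (starRingEnd ℂ τ.2 * τ.2)) * hτ1'
        + (δ.1 * δ.2) * hτ2'
    rw [← e3, mul_assoc, mul_inv_cancel₀ (mul_ne_zero hτ1ne hτ2ne), mul_one]
  -- the ray and its key parameters
  set m : ℝ := min (-a.re) (-b.re) with hmdef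
  have hm0 : 0 < m := lt_min (by linarith) (by linarith)
  set t₀ : ℝ := min ((-a.re) / (Complex.normSq a + 1)) ((-b.re) / (Complex.normSq b + 1))
    with ht₀def
  have ht₀0 : 0 < t₀ := by
    refine lt_min (div_pos (by linarith) ?_) (div_pos (by linarith) ?_)
    · have := Complex.normSq_nonneg a; linarith
    · have := Complex.normSq_nonneg b; linarith
  -- norm estimates along the ray
  have hcomp1 : ∀ t : ℝ, τ.1 + (t : ℂ) * δ.1 = τ.1 * (1 + (t : ℂ) * a) := by
    intro t; rw [hadef]; linear_combination (-(t : ℂ) * δ.1) * hτ1'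
  have hcomp2 : ∀ t : ℝ, τ.2 + (t : ℂ) * δ.2 = τ.2 * (1 + (t : ℂ) * b) := by
    intro t; rw [hbdef]; linear_combination (-(t : ℂ) * δ.2) * hτ2'
  have hz1 : ∀ t ∈ Ioo (0 : ℝ) t₀, ‖((τ.1 + (t : ℂ) * δ.1, τ.2 + (t : ℂ) * δ.2) : ℂ × ℂ)‖
      ≤ 1 - t * m / 2 := by
    rintro t ⟨ht0, htt⟩
    have h1 : ‖τ.1 + (t : ℂ) * δ.1‖ ≤ 1 + t * a.re / 2 := by
      rw [hcomp1 t, norm_mul, hτ1, one_mul]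
      exact aux_norm ha ht0 (le_trans htt.le (min_le_left _ _))
    have h2 : ‖τ.2 + (t : ℂ) * δ.2‖ ≤ 1 + t * b.re / 2 := by
      rw [hcomp2 t, norm_mul, hτ2, one_mul]
      exact aux_norm hb ht0 (le_trans htt.le (min_le_right _ _))
    have hma : m ≤ -a.re := min_le_left _ _
    have hmb : m ≤ -b.re := min_le_right _ _
    rw [Prod.norm_def]
    apply max_le
    · refine h1.trans ?_; nlinarith
    · refine h2.trans ?_; nlinarith
  have hz2 : ∀ t ∈ Ioo (0 : ℝ) t₀, ‖((τ.1 + (t : ℂ) * δ.1, τ.2 + (t : ℂ) * δ.2) : ℂ × ℂ)‖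
      < 1 := by
    intro t ht
    refine lt_of_le_of_lt (hz1 t ht) ?_
    nlinarith [ht.1, hm0]
  -- nontangential approach region
  set S : Set (ℂ × ℂ) :=
    (fun t : ℝ => ((τ.1 + (t : ℂ) * δ.1, τ.2 + (t : ℂ) * δ.2) : ℂ × ℂ)) '' (Ioo 0 t₀) with hSdef
  have hS1 : S ⊆ {z : ℂ × ℂ | ‖z‖ < 1} := by
    rintro _ ⟨t, ht, rfl⟩
    exact hz2 t ht
  set d : ℝ := max ‖δ.1‖ ‖δ.2‖ with hddef
  have hd0 : 0 ≤ d := le_max_of_le_left (norm_nonneg _)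
  have hzdist : ∀ t ∈ Ioo (0 : ℝ) t₀,
      ‖τ - ((τ.1 + (t : ℂ) * δ.1, τ.2 + (t : ℂ) * δ.2) : ℂ × ℂ)‖ ≤ t * d := by
    rintro t ⟨ht0, _⟩
    have hsub : τ - ((τ.1 + (t : ℂ) * δ.1, τ.2 + (t : ℂ) * δ.2) : ℂ × ℂ)
        = ((-((t : ℂ) * δ.1), -((t : ℂ) * δ.2)) : ℂ × ℂ) := by
      refine Prod.ext ?_ ?_ <;> simp [Prod.fst_sub, Prod.snd_sub] <;> ring
    rw [hsub, Prod.norm_def]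
    apply max_le
    · simp only [norm_neg, norm_mul, Complex.norm_real, Real.norm_eq_abs, abs_of_pos ht0]
      exact mul_le_mul_of_nonneg_left (le_max_left _ _) ht0.le
    · simp only [norm_neg, norm_mul, Complex.norm_real, Real.norm_eq_abs, abs_of_pos ht0]
      exact mul_le_mul_of_nonneg_left (le_max_right _ _) ht0.le
  have hS2 : ∃ c > 0, ∀ z ∈ S, ‖τ - z‖ ≤ c * (1 - ‖z‖) := by
    refine ⟨2 * d / m + 1, by positivity, ?_⟩
    rintro _ ⟨t, ht, rfl⟩
    have h1 := hz1 t ht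
    have h2 := hzdist t ht
    have h3 : t * m / 2 ≤ 1 - ‖((τ.1 + (t : ℂ) * δ.1, τ.2 + (t : ℂ) * δ.2) : ℂ × ℂ)‖ := by
      linarith
    have h4 : (2 * d / m) * (m / 2) = d := by field_simp
    have ht0 := ht.1
    calc ‖τ - ((τ.1 + (t : ℂ) * δ.1, τ.2 + (t : ℂ) * δ.2) : ℂ × ℂ)‖ ≤ t * d := h2
      _ ≤ (2 * d / m + 1) * (t * m / 2) := by nlinarith [mul_pos ht0 hm0]
      _ ≤ (2 * d / m + 1) * (1 - ‖((τ.1 + (t : ℂ) * δ.1, τ.2 + (t : ℂ) * δ.2) : ℂ × ℂ)‖) := by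
          apply mul_le_mul_of_nonneg_left h3 (by positivity)
  -- the ray tends to τ within S
  have hz0 : Tendsto (fun t : ℝ => ((τ.1 + (t : ℂ) * δ.1, τ.2 + (t : ℂ) * δ.2) : ℂ × ℂ))
      (nhdsWithin (0 : ℝ) (Ioi 0)) (nhdsWithin τ S) := by
    rw [tendsto_nhdsWithin_iff]
    constructor
    · have hcont : Continuous (fun t : ℝ =>
          ((τ.1 + (t : ℂ) * δ.1, τ.2 + (t : ℂ) * δ.2) : ℂ × ℂ)) := by fun_prop
      have h0 := (hcont.tendsto 0).mono_left (nhdsWithin_le_nhds (s := Ioi (0:ℝ)))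
      simpa using h0
    · filter_upwards [Ioo_mem_nhdsGT_of_mem (⟨le_refl 0, ht₀0⟩ : (0:ℝ) ∈ Ico (0:ℝ) t₀)]
        with t ht using mem_image_of_mem _ ht
  have hu : Tendsto (fun t : ℝ => v ((τ.1 + (t : ℂ) * δ.1, τ.2 + (t : ℂ) * δ.2) : ℂ × ℂ))
      (nhdsWithin (0 : ℝ) (Ioi 0)) (nhds vτ) := (hC S hS1 hS2).comp hz0
  have hg : Tendsto (fun t : ℝ => φ ((τ.1 + (t : ℂ) * δ.1, τ.2 + (t : ℂ) * δ.2) : ℂ × ℂ))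
      (nhdsWithin (0 : ℝ) (Ioi 0)) (nhds φτ) := (hφlim S hS1 hS2).comp hz0
  -- the operator IY along the ray
  have hIYformula : ∀ r : ℝ, r ≠ 0 →
      IY Y τ ((τ.1 + (r : ℂ) * δ.1, τ.2 + (r : ℂ) * δ.2) : ℂ × ℂ)
        = 1 + ((r : ℂ) * a * b) • B := by
    intro r hr
    rw [hBdef, hAdef, hadef, hbdef]
    exact aux_IY Y τ hτ1' hτ2' δ (by exact_mod_cast hr) (by rw [← hadef, ← hbdef, ← hAdef]; exact hA)
  -- the model identity along the ray
  have hexp : ∀ s ∈ Ioo (0 : ℝ) t₀, ∀ t ∈ Ioo (0 : ℝ) t₀,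
      (1 : ℂ) - starRingEnd ℂ (φ ((τ.1 + (s : ℂ) * δ.1, τ.2 + (s : ℂ) * δ.2) : ℂ × ℂ))
          * φ ((τ.1 + (t : ℂ) * δ.1, τ.2 + (t : ℂ) * δ.2) : ℂ × ℂ)
        = -(((s : ℂ) * (starRingEnd ℂ a) * (starRingEnd ℂ b))
              * ⟪B (v ((τ.1 + (s : ℂ) * δ.1, τ.2 + (s : ℂ) * δ.2) : ℂ × ℂ)),
                  v ((τ.1 + (t : ℂ) * δ.1, τ.2 + (t : ℂ) * δ.2) : ℂ × ℂ)⟫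
            + ((t : ℂ) * a * b)
              * ⟪v ((τ.1 + (s : ℂ) * δ.1, τ.2 + (s : ℂ) * δ.2) : ℂ × ℂ),
                  B (v ((τ.1 + (t : ℂ) * δ.1, τ.2 + (t : ℂ) * δ.2) : ℂ × ℂ))⟫
            + ((s : ℂ) * (starRingEnd ℂ a) * (starRingEnd ℂ b)) * ((t : ℂ) * a * b)
              * ⟪B (v ((τ.1 + (s : ℂ) * δ.1, τ.2 + (s : ℂ) * δ.2) : ℂ × ℂ)),
                  B (v ((τ.1 + (t : ℂ) * δ.1, τ.2 + (t : ℂ) * δ.2) : ℂ × ℂ))⟫) := by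
    intro s hs t ht
    have h0 := hmodel _ _ (hz2 t ht) (hz2 s hs)
    rw [hIYformula s hs.1.ne', hIYformula t ht.1.ne'] at h0
    simp only [ContinuousLinearMap.sub_apply, ContinuousLinearMap.one_apply,
      ContinuousLinearMap.mul_apply, inner_sub_right,
      ContinuousLinearMap.adjoint_inner_right, ContinuousLinearMap.add_apply,
      ContinuousLinearMap.smul_apply, inner_add_left, inner_add_right,
      inner_smul_left, inner_smul_right, map_mul, Complex.conj_ofReal] at h0
    linear_combination h0
  -- for fixed t, take the limit s → 0⁺ in the model identity
  have hkey : ∀ t ∈ Ioo (0 : ℝ) t₀,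
      (1 : ℂ) - starRingEnd ℂ φτ * φ ((τ.1 + (t : ℂ) * δ.1, τ.2 + (t : ℂ) * δ.2) : ℂ × ℂ)
        = -(((t : ℂ) * a * b)
            * ⟪vτ, B (v ((τ.1 + (t : ℂ) * δ.1, τ.2 + (t : ℂ) * δ.2) : ℂ × ℂ))⟫) := by
    intro t ht
    have hsc : Tendsto (fun s : ℝ => ((s : ℂ))) (nhdsWithin (0 : ℝ) (Ioi 0)) (nhds 0) := by
      have := (Complex.continuous_ofReal.tendsto 0).mono_left
        (nhdsWithin_le_nhds (s := Ioi (0:ℝ)))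
      simpa using this
    have hBu : Tendsto (fun s : ℝ =>
        B (v ((τ.1 + (s : ℂ) * δ.1, τ.2 + (s : ℂ) * δ.2) : ℂ × ℂ)))
        (nhdsWithin (0 : ℝ) (Ioi 0)) (nhds (B vτ)) := ((B.continuous.tendsto vτ).comp hu)
    have hlhs : Tendsto (fun s : ℝ =>
        (1 : ℂ) - starRingEnd ℂ (φ ((τ.1 + (s : ℂ) * δ.1, τ.2 + (s : ℂ) * δ.2) : ℂ × ℂ))
          * φ ((τ.1 + (t : ℂ) * δ.1, τ.2 + (t : ℂ) * δ.2) : ℂ × ℂ))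
        (nhdsWithin (0 : ℝ) (Ioi 0))
        (nhds ((1 : ℂ) - starRingEnd ℂ φτ
          * φ ((τ.1 + (t : ℂ) * δ.1, τ.2 + (t : ℂ) * δ.2) : ℂ × ℂ))) := by
      exact tendsto_const_nhds.sub
        (((Complex.continuous_conj.tendsto φτ).comp hg).mul tendsto_const_nhds)
    have hF : Tendsto (fun s : ℝ => (s : ℂ) * (starRingEnd ℂ a) * (starRingEnd ℂ b))
        (nhdsWithin (0 : ℝ) (Ioi 0)) (nhds 0) := by
      have := (hsc.mul_const (starRingEnd ℂ a)).mul_const (starRingEnd ℂ b)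
      simpa using this
    have hT1 : Tendsto (fun s : ℝ => ((s : ℂ) * (starRingEnd ℂ a) * (starRingEnd ℂ b))
        * ⟪B (v ((τ.1 + (s : ℂ) * δ.1, τ.2 + (s : ℂ) * δ.2) : ℂ × ℂ)),
            v ((τ.1 + (t : ℂ) * δ.1, τ.2 + (t : ℂ) * δ.2) : ℂ × ℂ)⟫)
        (nhdsWithin (0 : ℝ) (Ioi 0)) (nhds 0) := by
      have := hF.mul (hBu.inner (tendsto_const_nhds
        (x := v ((τ.1 + (t : ℂ) * δ.1, τ.2 + (t : ℂ) * δ.2) : ℂ × ℂ))))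
      simpa using this
    have hT2 : Tendsto (fun s : ℝ => ((t : ℂ) * a * b)
        * ⟪v ((τ.1 + (s : ℂ) * δ.1, τ.2 + (s : ℂ) * δ.2) : ℂ × ℂ),
            B (v ((τ.1 + (t : ℂ) * δ.1, τ.2 + (t : ℂ) * δ.2) : ℂ × ℂ))⟫)
        (nhdsWithin (0 : ℝ) (Ioi 0))
        (nhds (((t : ℂ) * a * b)
          * ⟪vτ, B (v ((τ.1 + (t : ℂ) * δ.1, τ.2 + (t : ℂ) * δ.2) : ℂ × ℂ))⟫)) :=
      tendsto_const_nhds.mul (hu.inner (tendsto_const_nhds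
        (x := B (v ((τ.1 + (t : ℂ) * δ.1, τ.2 + (t : ℂ) * δ.2) : ℂ × ℂ)))))
    have hT3 : Tendsto (fun s : ℝ => ((s : ℂ) * (starRingEnd ℂ a) * (starRingEnd ℂ b))
        * ((t : ℂ) * a * b)
        * ⟪B (v ((τ.1 + (s : ℂ) * δ.1, τ.2 + (s : ℂ) * δ.2) : ℂ × ℂ)),
            B (v ((τ.1 + (t : ℂ) * δ.1, τ.2 + (t : ℂ) * δ.2) : ℂ × ℂ))⟫)
        (nhdsWithin (0 : ℝ) (Ioi 0)) (nhds 0) := by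
      have := (hF.mul_const ((t : ℂ) * a * b)).mul (hBu.inner (tendsto_const_nhds
        (x := B (v ((τ.1 + (t : ℂ) * δ.1, τ.2 + (t : ℂ) * δ.2) : ℂ × ℂ)))))
      simpa using this
    have hrhs := ((hT1.add hT2).add hT3).neg
    rw [show (0 : ℂ) + ((t : ℂ) * a * b)
        * ⟪vτ, B (v ((τ.1 + (t : ℂ) * δ.1, τ.2 + (t : ℂ) * δ.2) : ℂ × ℂ))⟫ + 0
      = ((t : ℂ) * a * b)
        * ⟪vτ, B (v ((τ.1 + (t : ℂ) * δ.1, τ.2 + (t : ℂ) * δ.2) : ℂ × ℂ))⟫ by ring] at hrhs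
    have heq : (fun s : ℝ =>
        (1 : ℂ) - starRingEnd ℂ (φ ((τ.1 + (s : ℂ) * δ.1, τ.2 + (s : ℂ) * δ.2) : ℂ × ℂ))
          * φ ((τ.1 + (t : ℂ) * δ.1, τ.2 + (t : ℂ) * δ.2) : ℂ × ℂ))
        =ᶠ[nhdsWithin (0 : ℝ) (Ioi 0)]
        (fun s : ℝ => -(((s : ℂ) * (starRingEnd ℂ a) * (starRingEnd ℂ b))
              * ⟪B (v ((τ.1 + (s : ℂ) * δ.1, τ.2 + (s : ℂ) * δ.2) : ℂ × ℂ)),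
                  v ((τ.1 + (t : ℂ) * δ.1, τ.2 + (t : ℂ) * δ.2) : ℂ × ℂ)⟫
            + ((t : ℂ) * a * b)
              * ⟪v ((τ.1 + (s : ℂ) * δ.1, τ.2 + (s : ℂ) * δ.2) : ℂ × ℂ),
                  B (v ((τ.1 + (t : ℂ) * δ.1, τ.2 + (t : ℂ) * δ.2) : ℂ × ℂ))⟫
            + ((s : ℂ) * (starRingEnd ℂ a) * (starRingEnd ℂ b)) * ((t : ℂ) * a * b)
              * ⟪B (v ((τ.1 + (s : ℂ) * δ.1, τ.2 + (s : ℂ) * δ.2) : ℂ × ℂ)),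
                  B (v ((τ.1 + (t : ℂ) * δ.1, τ.2 + (t : ℂ) * δ.2) : ℂ × ℂ))⟫)) := by
      filter_upwards [Ioo_mem_nhdsGT_of_mem
        (⟨le_refl 0, ht₀0⟩ : (0:ℝ) ∈ Ico (0:ℝ) t₀)] with s hs
      exact hexp s hs t ht
    exact tendsto_nhds_unique (hlhs.congr' heq) hrhs
  -- conclude
  have hmod1 : φτ * starRingEnd ℂ φτ = 1 := by
    have hns : Complex.normSq φτ = 1 := by
      rw [Complex.normSq_eq_norm_sq, hφτ]; norm_num
    rw [Complex.mul_conj, hns]; norm_num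
  have hfinal : ∀ t ∈ Ioo (0 : ℝ) t₀,
      (φ ((τ.1 + (t : ℂ) * δ.1, τ.2 + (t : ℂ) * δ.2) : ℂ × ℂ) - φτ) / (t : ℂ)
        = φτ * ((a * b)
            * ⟪vτ, B (v ((τ.1 + (t : ℂ) * δ.1, τ.2 + (t : ℂ) * δ.2) : ℂ × ℂ))⟫) := by
    intro t ht
    have hk := hkey t ht
    have htne : ((t : ℂ)) ≠ 0 := by exact_mod_cast ht.1.ne'
    rw [div_eq_iff htne]
    linear_combination (-φτ) * hk
      - (φ ((τ.1 + (t : ℂ) * δ.1, τ.2 + (t : ℂ) * δ.2) : ℂ × ℂ)) * hmod1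
  have hlim : Tendsto (fun t : ℝ => φτ * ((a * b)
      * ⟪vτ, B (v ((τ.1 + (t : ℂ) * δ.1, τ.2 + (t : ℂ) * δ.2) : ℂ × ℂ))⟫))
      (nhdsWithin (0 : ℝ) (Ioi 0)) (nhds (φτ * ((a * b) * ⟪vτ, B vτ⟫))) := by
    exact tendsto_const_nhds.mul (tendsto_const_nhds.mul
      ((tendsto_const_nhds (x := vτ)).inner ((B.continuous.tendsto vτ).comp hu)))
  have hVeq : φτ * ⟪vτ, ((δ.1 * δ.2) • Ring.inverse ((τ.2 * δ.1) • ((1 : M →L[ℂ] M) - Y)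
      + (τ.1 * δ.2) • Y)) vτ⟫ = φτ * ((a * b) * ⟪vτ, B vτ⟫) := by
    rw [hBgoal, ContinuousLinearMap.smul_apply, inner_smul_right]
  rw [hVeq]
  refine hlim.congr' ?_
  filter_upwards [Ioo_mem_nhdsGT_of_mem
    (⟨le_refl 0, ht₀0⟩ : (0:ℝ) ∈ Ico (0:ℝ) t₀)] with t ht
  exact (hfinal t ht).symm
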